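/- arXiv:2603.19740 — 5 statements merged into one kernel-verified Lean document; each statement's English description precedes it below -/
import Mathlib

section
/- Let A be a real symmetric positive semidefinite N×N matrix (N ≥ 3) and let v ∈ ℝ^N. Set B := tr(A)·A − A². Then (1/3)‖v‖²·(2·tr(B·A) − tr(B)·tr(A)) ≤ 2⟨A v, B v⟩ − ⟨A v, v⟩·tr(B), where ⟨·,·⟩ is the Euclidean inner product on ℝ^N and ‖·‖ the Euclidean norm. -/
open Matrix

lemma esymm3_nonneg {ι : Type*} (s : Finset ι) (μ : ι → ℝ) (h : ∀ i ∈ s, 0 ≤ μ i) :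
    0 ≤ (∑ i ∈ s, μ i)^3 - 3*(∑ i ∈ s, μ i)*(∑ i ∈ s, (μ i)^2) + 2*∑ i ∈ s, (μ i)^3 := by
  induction s using Finset.cons_induction with
  | empty => simp
  | cons a s ha ih =>
    simp only [Finset.sum_cons]
    have ha' : 0 ≤ μ a := h a (Finset.mem_cons_self a s)
    have h' : ∀ i ∈ s, 0 ≤ μ i := fun i hi => h i (Finset.mem_cons_of_mem hi)
    have hp2 : ∑ i ∈ s, (μ i)^2 ≤ (∑ i ∈ s, μ i)^2 :=
      Finset.sum_sq_le_sq_sum_of_nonneg h'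
    nlinarith [ih h', mul_nonneg ha' (sub_nonneg.2 hp2)]

lemma scalar_key {N : ℕ} (lam c : Fin N → ℝ) (hlam : ∀ i, 0 ≤ lam i)
    (hc : ∀ i, 0 ≤ c i) :
    (1/3) * (∑ i, c i) *
      (2*((∑ i, lam i) * (∑ i, (lam i)^2) - ∑ i, (lam i)^3)
        - ((∑ i, lam i)^2 - ∑ i, (lam i)^2) * (∑ i, lam i))
    ≤ 2*((∑ i, lam i) * (∑ i, c i * (lam i)^2) - ∑ i, c i * (lam i)^3)
        - (∑ i, c i * lam i) * ((∑ i, lam i)^2 - ∑ i, (lam i)^2) := by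
  set t := ∑ i, lam i with ht
  set s2 := ∑ i, (lam i)^2 with hs2
  set s3 := ∑ i, (lam i)^3 with hs3
  have key : ∀ i : Fin N,
      (1/3) * (2*(t*s2 - s3) - (t^2 - s2)*t)
        ≤ 2*(t*(lam i)^2 - (lam i)^3) - lam i * (t^2 - s2) := by
    intro i
    have h0 : 0 ≤ (t - lam i)^3 - 3*(t - lam i)*(s2 - (lam i)^2)
        + 2*(s3 - (lam i)^3) := by
      have := esymm3_nonneg (Finset.univ.erase i) lam (fun j _ => hlam j)
      rw [Finset.sum_erase_eq_sub (Finset.mem_univ i),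
        Finset.sum_erase_eq_sub (f := fun j => (lam j)^2) (Finset.mem_univ i),
        Finset.sum_erase_eq_sub (f := fun j => (lam j)^3) (Finset.mem_univ i)] at this
      linarith [this]
    nlinarith [h0]
  calc (1/3) * (∑ i, c i) * (2*(t*s2 - s3) - (t^2 - s2)*t)
      = ∑ i, c i * ((1/3) * (2*(t*s2 - s3) - (t^2 - s2)*t)) := by
        rw [← Finset.sum_mul]; ring
    _ ≤ ∑ i, c i * (2*(t*(lam i)^2 - (lam i)^3) - lam i * (t^2 - s2)) := by
        apply Finset.sum_le_sum
        intro i _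
        exact mul_le_mul_of_nonneg_left (key i) (hc i)
    _ = 2*(t * (∑ i, c i * (lam i)^2) - ∑ i, c i * (lam i)^3)
        - (∑ i, c i * lam i) * (t^2 - s2) := by
        rw [Finset.mul_sum, ← Finset.sum_sub_distrib, Finset.mul_sum,
          Finset.sum_mul, ← Finset.sum_sub_distrib]
        apply Finset.sum_congr rfl
        intro i _
        ring


/-- For a real symmetric positive semidefinite `N × N` matrix `A` (`N ≥ 3`)
and `v ∈ ℝ^N`, with `B := tr(A) • A - A²`, one has
`(1/3)‖v‖² (2 tr(BA) - tr(B) tr(A)) ≤ 2 ⟨Av, Bv⟩ - ⟨Av, v⟩ tr(B)`. -/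
theorem sharp_matrix_inequality_posSemidef {N : ℕ} (hN : 3 ≤ N)
    (A : Matrix (Fin N) (Fin N) ℝ) (hA : A.PosSemidef) (v : Fin N → ℝ) :
    (1 / 3) * (v ⬝ᵥ v) *
        (2 * ((A.trace • A - A * A) * A).trace
          - (A.trace • A - A * A).trace * A.trace)
      ≤ 2 * ((A *ᵥ v) ⬝ᵥ ((A.trace • A - A * A) *ᵥ v))
          - ((A *ᵥ v) ⬝ᵥ v) * (A.trace • A - A * A).trace := by
  classical
  have hH := hA.1
  set U : Matrix (Fin N) (Fin N) ℝ := (hH.eigenvectorUnitary : Matrix (Fin N) (Fin N) ℝ)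
    with hUdef
  set lam : Fin N → ℝ := hH.eigenvalues with hlamdef
  have hlam : ∀ i, 0 ≤ lam i := fun i => hA.eigenvalues_nonneg i
  have hspec : A = U * diagonal lam * star U := by
    have := hH.spectral_theorem
    simpa using this
  have hUU : star U * U = 1 := mem_unitaryGroup_iff'.mp hH.eigenvectorUnitary.2
  have hUU' : U * star U = 1 := mem_unitaryGroup_iff.mp hH.eigenvectorUnitary.2
  have trace_conj : ∀ M : Matrix (Fin N) (Fin N) ℝ, (U * M * star U).trace = M.trace := by
    intro M
    rw [Matrix.trace_mul_cycle, hUU, one_mul]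
  set w : Fin N → ℝ := star U *ᵥ v with hwdef
  set c : Fin N → ℝ := fun i => (w i)^2 with hcdef
  have hc : ∀ i, 0 ≤ c i := fun i => sq_nonneg _
  have dot_conj : ∀ d : Fin N → ℝ,
      v ⬝ᵥ ((U * diagonal d * star U) *ᵥ v) = ∑ i, d i * (w i)^2 := by
    intro d
    rw [← Matrix.mulVec_mulVec, ← Matrix.mulVec_mulVec, Matrix.dotProduct_mulVec]
    have hvU : v ᵥ* U = w := by
      rw [hwdef, Matrix.star_eq_conjTranspose, Matrix.conjTranspose_eq_transpose_of_trivial,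
        Matrix.mulVec_transpose]
    rw [hvU]
    simp [dotProduct, Matrix.mulVec_diagonal]
    apply Finset.sum_congr rfl
    intro i _
    ring
  have conj_mul : ∀ d e : Fin N → ℝ,
      (U * diagonal d * star U) * (U * diagonal e * star U)
        = U * diagonal (fun i => d i * e i) * star U := by
    intro d e
    simp only [mul_assoc]
    rw [← mul_assoc (star U) U, hUU, one_mul, ← mul_assoc (diagonal d),
      diagonal_mul_diagonal]
  have hA2 : A * A = U * diagonal (fun i => lam i * lam i) * star U := by
    rw [hspec, conj_mul]
  have hA3 : A * A * A = U * diagonal (fun i => lam i * lam i * lam i) * star U := by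
    rw [hA2, hspec, conj_mul]
  -- traces
  have hT1 : A.trace = ∑ i, lam i := by
    rw [hspec, trace_conj, trace_diagonal]
  have hT2 : (A * A).trace = ∑ i, (lam i)^2 := by
    rw [hA2, trace_conj, trace_diagonal]
    exact Finset.sum_congr rfl fun i _ => by ring
  have hT3 : (A * A * A).trace = ∑ i, (lam i)^3 := by
    rw [hA3, trace_conj, trace_diagonal]
    exact Finset.sum_congr rfl fun i _ => by ring
  -- dot products
  have hW : v ⬝ᵥ v = ∑ i, c i := by
    have h1 : (1 : Matrix (Fin N) (Fin N) ℝ) = U * diagonal (fun _ => (1:ℝ)) * star U := by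
      rw [show (diagonal (fun _ => (1:ℝ)) : Matrix (Fin N) (Fin N) ℝ) = 1 from diagonal_one,
        mul_one, hUU']
    calc v ⬝ᵥ v = v ⬝ᵥ ((1 : Matrix (Fin N) (Fin N) ℝ) *ᵥ v) := by rw [Matrix.one_mulVec]
      _ = ∑ i, c i := by
          rw [h1, dot_conj]
          exact Finset.sum_congr rfl fun i _ => by simp [hcdef]
  have hQ1 : v ⬝ᵥ (A *ᵥ v) = ∑ i, c i * lam i := by
    conv_lhs => rw [hspec]
    rw [dot_conj]
    exact Finset.sum_congr rfl fun i _ => by simp [hcdef]; ring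
  have hQ2 : v ⬝ᵥ ((A * A) *ᵥ v) = ∑ i, c i * (lam i)^2 := by
    conv_lhs => rw [hA2]
    rw [dot_conj]
    exact Finset.sum_congr rfl fun i _ => by simp [hcdef]; ring
  have hQ3 : v ⬝ᵥ ((A * A * A) *ᵥ v) = ∑ i, c i * (lam i)^3 := by
    conv_lhs => rw [hA3]
    rw [dot_conj]
    exact Finset.sum_congr rfl fun i _ => by simp [hcdef]; ring
  -- symmetry of A
  have hsymm : Aᵀ = A := by
    rw [← Matrix.conjTranspose_eq_transpose_of_trivial]
    exact hH
  have hAv : A *ᵥ v = v ᵥ* A := by rw [← Matrix.mulVec_transpose, hsymm]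
  -- rewrite goal pieces
  have e1 : ((A.trace • A - A * A) * A).trace
      = A.trace * (A * A).trace - (A * A * A).trace := by
    rw [sub_mul, smul_mul_assoc, Matrix.trace_sub, Matrix.trace_smul, smul_eq_mul]
  have e2 : (A.trace • A - A * A).trace = A.trace * A.trace - (A * A).trace := by
    rw [Matrix.trace_sub, Matrix.trace_smul, smul_eq_mul]
  have e3 : (A *ᵥ v) ⬝ᵥ ((A.trace • A - A * A) *ᵥ v)
      = A.trace * (v ⬝ᵥ ((A * A) *ᵥ v)) - v ⬝ᵥ ((A * A * A) *ᵥ v) := by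
    rw [hAv, ← Matrix.dotProduct_mulVec, Matrix.mulVec_mulVec]
    have hAC : A * (A.trace • A - A * A) = A.trace • (A * A) - A * A * A := by
      rw [Matrix.mul_sub, mul_smul_comm, ← mul_assoc]
    rw [hAC, Matrix.sub_mulVec, dotProduct_sub, Matrix.smul_mulVec,
      dotProduct_smul, smul_eq_mul]
  have e4 : (A *ᵥ v) ⬝ᵥ v = v ⬝ᵥ (A *ᵥ v) := dotProduct_comm _ _
  rw [e1, e2, e3, e4, hT1, hT2, hT3, hW, hQ1, hQ2, hQ3]
  have key := scalar_key lam c hlam hc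
  refine le_trans (le_of_eq ?_) (le_trans key (le_of_eq ?_)) <;> ring
end

section
/- Let A be a real symmetric negative semidefinite N×N matrix (N ≥ 3) and let v ∈ ℝ^N. Set B := tr(A)·A − A². Then (1/3)‖v‖²·(2·tr(B·A) − tr(B)·tr(A)) ≥ 2⟨A v, B v⟩ − ⟨A v, v⟩·tr(B). -/
open Matrix Finset

lemma key_scalar {ι : Type*} (s : Finset ι) (f : ι → ℝ) (hf : ∀ i ∈ s, 0 ≤ f i) :
    3 * (∑ i ∈ s, f i) * (∑ i ∈ s, f i ^ 2) ≤ (∑ i ∈ s, f i) ^ 3 + 2 * ∑ i ∈ s, f i ^ 3 := by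
  induction s using Finset.cons_induction with
  | empty => simp
  | cons a s ha ih =>
    simp only [Finset.sum_cons]
    have hfa : 0 ≤ f a := hf a (Finset.mem_cons_self a s)
    have hf' : ∀ i ∈ s, 0 ≤ f i := fun i hi => hf i (Finset.mem_cons_of_mem hi)
    have ih' := ih hf'
    have hq : ∑ i ∈ s, f i ^ 2 ≤ (∑ i ∈ s, f i) ^ 2 :=
      Finset.sum_sq_le_sq_sum_of_nonneg hf'
    have hp : 0 ≤ ∑ i ∈ s, f i := Finset.sum_nonneg hf'
    nlinarith [mul_nonneg hfa (sub_nonneg.2 hq)]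

set_option maxHeartbeats 1000000 in
/-- For a real symmetric negative semidefinite `N × N` matrix `A` (`N ≥ 3`)
and `v ∈ ℝ^N`, with `B := tr(A) • A - A²`, one has
`(1/3)‖v‖² (2 tr(BA) - tr(B) tr(A)) ≥ 2 ⟨Av, Bv⟩ - ⟨Av, v⟩ tr(B)`. -/
theorem sharp_matrix_inequality_negSemidef {N : ℕ} (hN : 3 ≤ N)
    (A : Matrix (Fin N) (Fin N) ℝ) (hA : (-A).PosSemidef) (v : Fin N → ℝ) :
    (1 / 3) * (v ⬝ᵥ v) *
        (2 * ((A.trace • A - A * A) * A).trace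
          - (A.trace • A - A * A).trace * A.trace)
      ≥ 2 * ((A *ᵥ v) ⬝ᵥ ((A.trace • A - A * A) *ᵥ v))
          - ((A *ᵥ v) ⬝ᵥ v) * (A.trace • A - A * A).trace := by
  classical
  obtain ⟨M, hAM, hM⟩ : ∃ M : Matrix (Fin N) (Fin N) ℝ, A = -M ∧ M.PosSemidef :=
    ⟨-A, by simp, hA⟩
  have hH : M.IsHermitian := hM.1
  set lam : Fin N → ℝ := hH.eigenvalues with hlamdef
  have hlam : ∀ i, 0 ≤ lam i := fun i => hM.eigenvalues_nonneg i
  obtain ⟨U, hUmem, hspec⟩ : ∃ U : Matrix (Fin N) (Fin N) ℝ,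
      U ∈ Matrix.unitaryGroup (Fin N) ℝ ∧ M = U * Matrix.diagonal lam * star U := by
    refine ⟨hH.eigenvectorUnitary, hH.eigenvectorUnitary.2, ?_⟩
    have := hH.spectral_theorem
    simpa [RCLike.ofReal_real_eq_id] using this
  have hU1 : star U * U = 1 := mem_unitaryGroup_iff'.mp hUmem
  have hU2 : U * star U = 1 := mem_unitaryGroup_iff.mp hUmem
  have hpow : ∀ k : ℕ, M ^ k = U * (Matrix.diagonal lam) ^ k * star U := by
    intro k
    induction k with
    | zero => simp [hU2]
    | succ k ih =>
      rw [pow_succ, ih]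
      conv_lhs => rw [hspec]
      rw [pow_succ]
      simp only [Matrix.mul_assoc]
      rw [← Matrix.mul_assoc (star U) U, hU1, Matrix.one_mul]
  have hT : ∀ k : ℕ, (M ^ k).trace = ∑ i, lam i ^ k := by
    intro k
    rw [hpow k, Matrix.trace_mul_cycle, hU1, Matrix.one_mul,
      Matrix.diagonal_pow, Matrix.trace_diagonal]
    simp [Pi.pow_apply]
  set w : Fin N → ℝ := star U *ᵥ v with hwdef
  have hMT : Mᵀ = M := by
    have h2 := hH
    rwa [Matrix.IsHermitian, Matrix.conjTranspose_eq_transpose_of_trivial] at h2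
  have hP : ∀ k : ℕ, v ⬝ᵥ ((M ^ k) *ᵥ v) = ∑ i, lam i ^ k * w i ^ 2 := by
    intro k
    rw [hpow k, ← Matrix.mulVec_mulVec, ← Matrix.mulVec_mulVec,
      Matrix.dotProduct_mulVec v U]
    have hvw : v ᵥ* U = w := by
      rw [hwdef, Matrix.star_eq_conjTranspose, Matrix.conjTranspose_eq_transpose_of_trivial,
        Matrix.mulVec_transpose]
    rw [hvw, hwdef, Matrix.diagonal_pow]
    simp only [dotProduct, Matrix.mulVec_diagonal, Pi.pow_apply, ← hwdef]
    exact Finset.sum_congr rfl fun i _ => by ring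
  have hsymdot : ∀ x : Fin N → ℝ, (M *ᵥ v) ⬝ᵥ x = v ⬝ᵥ (M *ᵥ x) := by
    intro x
    conv_rhs => rw [← hMT]
    rw [Matrix.dotProduct_mulVec, Matrix.vecMul_transpose]
  set T1 : ℝ := (M ^ 1).trace with hT1
  set T2 : ℝ := (M ^ 2).trace with hT2
  set T3 : ℝ := (M ^ 3).trace with hT3
  set P0 : ℝ := v ⬝ᵥ ((M ^ 0) *ᵥ v) with hP0
  set P1 : ℝ := v ⬝ᵥ ((M ^ 1) *ᵥ v) with hP1
  set P2 : ℝ := v ⬝ᵥ ((M ^ 2) *ᵥ v) with hP2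
  set P3 : ℝ := v ⬝ᵥ ((M ^ 3) *ᵥ v) with hP3
  have hTr : M.trace = T1 := by rw [hT1, pow_one]
  have hB : A.trace • A - A * A = M.trace • M - M ^ 2 := by
    rw [hAM, Matrix.trace_neg, neg_smul, smul_neg, neg_neg, neg_mul_neg, ← pow_two]
  have h22 : M * M = M ^ 2 := (pow_two M).symm
  have h23 : M ^ 2 * M = M ^ 3 := by rw [← pow_succ]
  have e1 : ((A.trace • A - A * A) * A).trace = -(T1 * T2) + T3 := by
    rw [hB, hAM, Matrix.mul_neg, Matrix.trace_neg, Matrix.sub_mul, Matrix.smul_mul, h23,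
      Matrix.trace_sub, Matrix.trace_smul, h22, hTr, ← hT2, ← hT3, smul_eq_mul]
    ring
  have e2 : (A.trace • A - A * A).trace = T1 ^ 2 - T2 := by
    rw [hB, Matrix.trace_sub, Matrix.trace_smul, hTr, ← hT2, smul_eq_mul]
    ring
  have e3 : (A *ᵥ v) ⬝ᵥ ((A.trace • A - A * A) *ᵥ v) = -(T1 * P2) + P3 := by
    rw [hB, hAM, Matrix.neg_mulVec, neg_dotProduct, Matrix.sub_mulVec,
      Matrix.smul_mulVec, dotProduct_sub, dotProduct_smul,
      hsymdot, hsymdot, Matrix.mulVec_mulVec, Matrix.mulVec_mulVec, ← pow_two,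
      ← pow_succ', hTr, ← hP2, ← hP3, smul_eq_mul]
    ring
  have e4 : (A *ᵥ v) ⬝ᵥ v = -P1 := by
    rw [hAM, Matrix.neg_mulVec, neg_dotProduct, dotProduct_comm]
    rw [show M *ᵥ v = (M ^ 1) *ᵥ v by rw [pow_one], ← hP1]
  have e5 : v ⬝ᵥ v = P0 := by rw [hP0, pow_zero, Matrix.one_mulVec]
  -- sums
  have s1 : T1 = ∑ i, lam i := by rw [hT1, hT 1]; simp
  have s2 : T2 = ∑ i, lam i ^ 2 := by rw [hT2, hT 2]
  have s3 : T3 = ∑ i, lam i ^ 3 := by rw [hT3, hT 3]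
  have p0 : P0 = ∑ i, w i ^ 2 := by rw [hP0, hP 0]; simp
  have p1 : P1 = ∑ i, lam i * w i ^ 2 := by rw [hP1, hP 1]; simp
  have p2 : P2 = ∑ i, lam i ^ 2 * w i ^ 2 := by rw [hP2, hP 2]
  have p3 : P3 = ∑ i, lam i ^ 3 * w i ^ 2 := by rw [hP3, hP 3]
  have pointwise : ∀ i : Fin N,
      w i ^ 2 * (lam i * T1 ^ 2 - 2 * T1 * lam i ^ 2 + 2 * lam i ^ 3 - lam i * T2)
        ≤ w i ^ 2 * ((1 / 3) * (T1 ^ 3 - 3 * T1 * T2 + 2 * T3)) := by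
    intro i
    apply mul_le_mul_of_nonneg_left _ (sq_nonneg _)
    have hk := key_scalar (Finset.univ.erase i) lam (fun j _ => hlam j)
    have h1 : ∑ j ∈ Finset.univ.erase i, lam j = T1 - lam i := by
      rw [Finset.sum_erase_eq_sub (Finset.mem_univ i), ← s1]
    have h2 : ∑ j ∈ Finset.univ.erase i, lam j ^ 2 = T2 - lam i ^ 2 := by
      rw [Finset.sum_erase_eq_sub (Finset.mem_univ i), ← s2]
    have h3 : ∑ j ∈ Finset.univ.erase i, lam j ^ 3 = T3 - lam i ^ 3 := by
      rw [Finset.sum_erase_eq_sub (Finset.mem_univ i), ← s3]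
    rw [h1, h2, h3] at hk
    nlinarith [hk]
  have sumEq2 : 2 * (-(T1 * P2) + P3) - -P1 * (T1 ^ 2 - T2)
      = ∑ i, w i ^ 2 * (lam i * T1 ^ 2 - 2 * T1 * lam i ^ 2 + 2 * lam i ^ 3 - lam i * T2) := by
    have step : ∀ i : Fin N,
        w i ^ 2 * (lam i * T1 ^ 2 - 2 * T1 * lam i ^ 2 + 2 * lam i ^ 3 - lam i * T2)
          = T1 ^ 2 * (lam i * w i ^ 2) - 2 * T1 * (lam i ^ 2 * w i ^ 2)
            + 2 * (lam i ^ 3 * w i ^ 2) - T2 * (lam i * w i ^ 2) := fun i => by ring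
    rw [Finset.sum_congr rfl fun i _ => step i]
    simp only [Finset.sum_sub_distrib, Finset.sum_add_distrib]
    simp only [← Finset.mul_sum]
    rw [← p1, ← p2, ← p3]
    ring
  have hle : ∑ i, w i ^ 2 * (lam i * T1 ^ 2 - 2 * T1 * lam i ^ 2 + 2 * lam i ^ 3 - lam i * T2)
      ≤ ∑ i, w i ^ 2 * ((1 / 3) * (T1 ^ 3 - 3 * T1 * T2 + 2 * T3)) :=
    Finset.sum_le_sum fun i _ => pointwise i
  have sumEq3 : ∑ i, w i ^ 2 * ((1 / 3) * (T1 ^ 3 - 3 * T1 * T2 + 2 * T3))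
      = (1 / 3) * P0 * (T1 ^ 3 - 3 * T1 * T2 + 2 * T3) := by
    rw [← Finset.sum_mul, ← p0]
    ring
  rw [e1, e2, e3, e4, e5, ge_iff_le]
  have e6 : A.trace = -T1 := by rw [hAM, Matrix.trace_neg, hTr]
  rw [e6]
  linarith [hle, sumEq2, sumEq3]
end

section
/- Let N ≥ 3, let D = diag(λ₁,…,λ_N) be a real diagonal N×N matrix, let w ∈ ℝ^N, and set B := tr(D)·D − D². Then [2⟨D w, B w⟩ − ⟨D w, w⟩·tr(B)] − (1/3)‖w‖²·(2·tr(B·D) − tr(B)·tr(D)) = 2·Σ_{k=1}^N w_k²·S₃^{(k)}(λ), where S₃^{(k)}(λ) denotes the third elementary symmetric function of the (N−1)-tuple (λ₁,…,λ_{k−1},λ_{k+1},…,λ_N) when N ≥ 4, and S₃^{(k)}(λ) := 0 when N = 3. -/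
open Matrix

section helpers
variable {ι : Type*} [DecidableEq ι]

omit [DecidableEq ι] in
lemma pc_base (f : ι → ℝ) (n : ℕ) :
    ∑ t ∈ (∅ : Finset ι).powersetCard (n+1), ∏ i ∈ t, f i = 0 := by
  rw [Finset.powersetCard_eq_empty.2 (by simp)]; simp

lemma pc_insert (f : ι → ℝ) {a : ι} {s : Finset ι} (ha : a ∉ s) (n : ℕ) :
    ∑ t ∈ (insert a s).powersetCard (n+1), ∏ i ∈ t, f i
      = (∑ t ∈ s.powersetCard (n+1), ∏ i ∈ t, f i)
        + f a * ∑ t ∈ s.powersetCard n, ∏ i ∈ t, f i := by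
  rw [Finset.powersetCard_succ_insert ha, Finset.sum_union, Finset.sum_image]
  · congr 1
    rw [Finset.mul_sum]
    refine Finset.sum_congr rfl fun t ht => ?_
    have hat : a ∉ t := fun h' => ha ((Finset.mem_powersetCard.1 ht).1 h')
    rw [Finset.prod_insert hat]
  · intro t ht u hu h
    have hat : a ∉ t := fun h' => ha ((Finset.mem_powersetCard.1 ht).1 h')
    have hau : a ∉ u := fun h' => ha ((Finset.mem_powersetCard.1 hu).1 h')
    rw [← Finset.erase_insert hat, h, Finset.erase_insert hau]
  · rw [Finset.disjoint_left]
    intro t ht ht'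
    obtain ⟨u, hu, rfl⟩ := Finset.mem_image.1 ht'
    exact ha ((Finset.mem_powersetCard.1 ht).1 (Finset.mem_insert_self a u))

lemma pc1 (f : ι → ℝ) (s : Finset ι) :
    ∑ t ∈ s.powersetCard 1, ∏ i ∈ t, f i = ∑ i ∈ s, f i := by
  induction s using Finset.induction_on with
  | empty => rw [pc_base]; simp
  | insert _ _ ha ih =>
    rw [pc_insert f ha, ih, Finset.sum_insert ha]
    simp; ring

lemma pc2 (f : ι → ℝ) (s : Finset ι) :
    2 * ∑ t ∈ s.powersetCard 2, ∏ i ∈ t, f i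
      = (∑ i ∈ s, f i)^2 - ∑ i ∈ s, (f i)^2 := by
  induction s using Finset.induction_on with
  | empty => rw [pc_base]; simp
  | insert _ _ ha ih =>
    rename_i a s
    rw [pc_insert f ha 1, pc1, Finset.sum_insert ha, Finset.sum_insert ha]
    linear_combination ih

lemma pc3 (f : ι → ℝ) (s : Finset ι) :
    6 * ∑ t ∈ s.powersetCard 3, ∏ i ∈ t, f i
      = (∑ i ∈ s, f i)^3 - 3 * (∑ i ∈ s, f i) * (∑ i ∈ s, (f i)^2)
        + 2 * ∑ i ∈ s, (f i)^3 := by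
  induction s using Finset.induction_on with
  | empty => rw [pc_base]; simp
  | insert _ _ ha ih =>
    rename_i a s
    rw [pc_insert f ha 2, Finset.sum_insert ha, Finset.sum_insert ha, Finset.sum_insert ha]
    linear_combination ih + 3 * f a * pc2 f s

end helpers

/-- The third elementary symmetric function of the `(N-1)`-tuple obtained from
`λ₁, …, λ_N` by omitting `λ_k`; by convention it is `0` when `N = 3`. -/
noncomputable def S3omit {N : ℕ} (lam : Fin N → ℝ) (k : Fin N) : ℝ :=
  if N = 3 then 0
  else ∑ t ∈ (Finset.univ.erase k).powersetCard 3, ∏ i ∈ t, lam i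

lemma S3omit_eq_sum {N : ℕ} (lam : Fin N → ℝ) (k : Fin N) :
    S3omit lam k = ∑ t ∈ (Finset.univ.erase k).powersetCard 3, ∏ i ∈ t, lam i := by
  unfold S3omit
  split
  · rename_i h3
    rw [Finset.powersetCard_eq_empty.2 (by
      rw [Finset.card_erase_of_mem (Finset.mem_univ k), Finset.card_univ, Fintype.card_fin, h3]
      norm_num)]
    simp
  · rfl

lemma S3omit_key {N : ℕ} (lam : Fin N → ℝ) (k : Fin N) :
    6 * S3omit lam k
      = ((∑ i, lam i) - lam k)^3
        - 3 * ((∑ i, lam i) - lam k) * ((∑ i, (lam i)^2) - (lam k)^2)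
        + 2 * ((∑ i, (lam i)^3) - (lam k)^3) := by
  rw [S3omit_eq_sum, pc3,
    Finset.sum_erase_eq_sub (Finset.mem_univ k),
    Finset.sum_erase_eq_sub (Finset.mem_univ k),
    Finset.sum_erase_eq_sub (Finset.mem_univ k)]

lemma combine {ι : Type*} (s : Finset ι) (f1 f2 f0 f3 : ι → ℝ) (c d : ℝ)
    (h : ∀ i ∈ s, 2 * f1 i - f2 i * c - 1 / 3 * f0 i * d = 2 * f3 i) :
    2 * (∑ i ∈ s, f1 i) - (∑ i ∈ s, f2 i) * c - 1 / 3 * (∑ i ∈ s, f0 i) * d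
      = 2 * ∑ i ∈ s, f3 i := by
  simp only [Finset.mul_sum, Finset.sum_mul, ← Finset.sum_sub_distrib]
  exact Finset.sum_congr rfl fun i hi => by linear_combination h i hi

theorem diagonal_difference_identity {N : ℕ} (hN : 3 ≤ N)
    (lam : Fin N → ℝ) (w : Fin N → ℝ) :
    (2 * ((Matrix.diagonal lam *ᵥ w) ⬝ᵥ
            (((Matrix.diagonal lam).trace • Matrix.diagonal lam
              - Matrix.diagonal lam * Matrix.diagonal lam) *ᵥ w))
        - ((Matrix.diagonal lam *ᵥ w) ⬝ᵥ w) *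
            ((Matrix.diagonal lam).trace • Matrix.diagonal lam
              - Matrix.diagonal lam * Matrix.diagonal lam).trace)
      - (1 / 3) * (w ⬝ᵥ w) *
          (2 * ((((Matrix.diagonal lam).trace • Matrix.diagonal lam
                  - Matrix.diagonal lam * Matrix.diagonal lam) * Matrix.diagonal lam).trace)
            - ((Matrix.diagonal lam).trace • Matrix.diagonal lam
                - Matrix.diagonal lam * Matrix.diagonal lam).trace * (Matrix.diagonal lam).trace)
      = 2 * ∑ k, w k ^ 2 * S3omit lam k := by
  have h1 : (Matrix.diagonal lam).trace • Matrix.diagonal lam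
      - Matrix.diagonal lam * Matrix.diagonal lam
      = Matrix.diagonal (fun i => (∑ j, lam j) * lam i - lam i * lam i) := by
    rw [Matrix.trace_diagonal, Matrix.diagonal_mul_diagonal, ← Matrix.diagonal_smul,
      ← Matrix.diagonal_sub]
    rfl
  rw [h1]
  simp only [Matrix.trace_diagonal, Matrix.diagonal_mul_diagonal, dotProduct,
    Matrix.mulVec_diagonal]
  have htrB : ∑ i, ((∑ j, lam j) * lam i - lam i * lam i)
      = (∑ i, lam i) * (∑ i, lam i) - ∑ i, (lam i)^2 := by
    rw [Finset.sum_sub_distrib, ← Finset.mul_sum]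
    simp [sq]
  have htrBD : ∑ i, (((∑ j, lam j) * lam i - lam i * lam i) * lam i)
      = (∑ i, lam i) * (∑ i, (lam i)^2) - ∑ i, (lam i)^3 := by
    simp only [sub_mul, mul_assoc]
    rw [Finset.sum_sub_distrib, ← Finset.mul_sum]
    congr 1
    · congr 1; exact Finset.sum_congr rfl fun i _ => by ring
    · exact Finset.sum_congr rfl fun i _ => by ring
  rw [htrB, htrBD]
  refine combine Finset.univ _ _ _ _ _ _ fun k _ => ?_
  linear_combination (-(w k ^ 2) / 3) * S3omit_key lam k
end

section
/- For a real symmetric N×N matrix C and a vector v ∈ ℝ^N, define M(C, v) := (1/3)‖v‖²·[2·tr((tr(C)·I − C)·C²) − 2·S₂(C)·tr(C)] − 2⟨(tr(C)·I − C)·C v, C v⟩ + 2·S₂(C)·⟨C v, v⟩. Then for every real symmetric N×N matrix A, every v ∈ ℝ^N, and all scalars α, β ∈ ℝ, one has the identity M(α·A + β·(v ⊗ v), v) = α³·M(A, v). -/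
open Matrix

/-- `S₂(M) := (1/2)[(tr M)² − tr(M²)]`. -/
noncomputable def S2 {N : ℕ} (M : Matrix (Fin N) (Fin N) ℝ) : ℝ :=
  (1 / 2) * (M.trace ^ 2 - (M * M).trace)

/-- `M(C, v) := (1/3)‖v‖²·[2·tr((tr(C)·I − C)·C²) − 2·S₂(C)·tr(C)]
  − 2⟨(tr(C)·I − C)·C v, C v⟩ + 2·S₂(C)·⟨C v, v⟩`. -/
noncomputable def Mfun {N : ℕ} (C : Matrix (Fin N) (Fin N) ℝ) (v : Fin N → ℝ) : ℝ :=
  (1 / 3) * (v ⬝ᵥ v) *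
      (2 * ((C.trace • (1 : Matrix (Fin N) (Fin N) ℝ) - C) * (C * C)).trace
        - 2 * S2 C * C.trace)
    - 2 * (((C.trace • (1 : Matrix (Fin N) (Fin N) ℝ) - C) *ᵥ (C *ᵥ v)) ⬝ᵥ (C *ᵥ v))
    + 2 * S2 C * ((C *ᵥ v) ⬝ᵥ v)

section Aux

variable {N : ℕ}

lemma vv_mulVec (v w x : Fin N → ℝ) : vecMulVec v w *ᵥ x = (w ⬝ᵥ x) • v := by
  funext i
  simp only [mulVec, vecMulVec_apply, dotProduct, Pi.smul_apply, smul_eq_mul]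
  rw [Finset.sum_mul]
  exact Finset.sum_congr rfl fun _ _ => by ring

lemma mul_vv (M : Matrix (Fin N) (Fin N) ℝ) (v w : Fin N → ℝ) :
    M * vecMulVec v w = vecMulVec (M *ᵥ v) w := by
  ext i j
  simp only [mul_apply, vecMulVec_apply, mulVec, dotProduct, Finset.sum_mul]
  exact Finset.sum_congr rfl fun _ _ => by ring

lemma vv_mul (M : Matrix (Fin N) (Fin N) ℝ) (v w : Fin N → ℝ) :
    vecMulVec v w * M = vecMulVec v (Mᵀ *ᵥ w) := by
  ext i j
  simp only [mul_apply, vecMulVec_apply, mulVec, transpose_apply, dotProduct, Finset.mul_sum]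
  exact Finset.sum_congr rfl fun _ _ => by ring

lemma vv_transpose (v w : Fin N → ℝ) : (vecMulVec v w)ᵀ = vecMulVec w v := by
  ext i j; simp [vecMulVec_apply, mul_comm]

lemma trace_vv (v w : Fin N → ℝ) : (vecMulVec v w).trace = v ⬝ᵥ w := by
  simp [trace, vecMulVec_apply, diag, dotProduct]

lemma vv_smul_right (v w : Fin N → ℝ) (c : ℝ) :
    vecMulVec v (c • w) = c • vecMulVec v w := by
  ext i j; simp [vecMulVec_apply]; ring

lemma vv_smul_left (v w : Fin N → ℝ) (c : ℝ) :
    vecMulVec (c • v) w = c • vecMulVec v w := by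
  ext i j; simp [vecMulVec_apply]; ring

end Aux

/-- For every real symmetric `N × N` matrix `A`, every `v ∈ ℝ^N` and all
scalars `α, β ∈ ℝ`, one has `M(α A + β (v ⊗ v), v) = α³ M(A, v)`. -/
theorem Mfun_rank_one_perturbation {N : ℕ}
    (A : Matrix (Fin N) (Fin N) ℝ) (hA : A.IsSymm) (v : Fin N → ℝ) (α β : ℝ) :
    Mfun (α • A + β • Matrix.vecMulVec v v) v = α ^ 3 * Mfun A v := by
  have hsymm : ∀ x y : Fin N → ℝ, (A *ᵥ x) ⬝ᵥ y = x ⬝ᵥ (A *ᵥ y) := fun x y => by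
    rw [dotProduct_mulVec, ← mulVec_transpose, hA.eq, dotProduct_comm]
  have hdc : ∀ x : Fin N → ℝ, (A *ᵥ x) ⬝ᵥ v = v ⬝ᵥ (A *ᵥ x) := fun x => dotProduct_comm _ _
  have hvv : ∀ x : Fin N → ℝ, (vecMulVec v v *ᵥ x) ⬝ᵥ v = (v ⬝ᵥ x) * (v ⬝ᵥ v) := fun x => by
    simp [vv_mulVec]
  simp only [Mfun, S2, sub_mul, smul_mul_assoc, one_mul, trace_sub, trace_smul, smul_eq_mul,
    sub_mulVec, smul_mulVec, one_mulVec, sub_dotProduct, smul_dotProduct,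
    mul_add, add_mul, mul_vv, vv_mul, transpose_add, transpose_smul, hA.eq,
    vv_transpose, mul_smul_comm, transpose_mul, ← mulVec_mulVec, mulVec_add, add_mulVec,
    vv_mulVec, vv_smul_left, vv_smul_right,
    trace_add, trace_vv, mulVec_smul, dotProduct_add, add_dotProduct, dotProduct_smul,
    hsymm, hdc, hvv, smul_smul, smul_add]
  ring
end

section
/- Let N ≥ 3, let H be a real symmetric N×N matrix, g ∈ ℝ^N, and let a > 0 and b ∈ ℝ be such that the matrix a·H + b·(g ⊗ g) is positive semidefinite. Then, with s := tr(H), one has (1/3)‖g‖²·[2·tr((s·I − H)·H²) − 2·S₂(H)·s] ≤ 2⟨(s·I − H)·H g, H g⟩ − 2·S₂(H)·⟨H g, g⟩. -/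
open Finset

variable {α : Type*} [DecidableEq α]

noncomputable def E (lam : α → ℝ) (s : Finset α) (k : ℕ) : ℝ :=
  ∑ t ∈ s.powersetCard k, ∏ i ∈ t, lam i

lemma E_zero (lam : α → ℝ) (s : Finset α) : E lam s 0 = 1 := by
  simp [E]

lemma E_insert (lam : α → ℝ) {a : α} {s : Finset α} (h : a ∉ s) (k : ℕ) :
    E lam (insert a s) (k + 1) = E lam s (k + 1) + lam a * E lam s k := by
  unfold E
  rw [Finset.powersetCard_succ_insert h, Finset.sum_union, Finset.sum_image]
  · rw [Finset.mul_sum]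
    congr 1
    refine Finset.sum_congr rfl fun t ht => ?_
    rw [Finset.prod_insert (fun hc => h ((Finset.mem_powersetCard.mp ht).1 hc))]
  · intro t ht u hu he
    have hat : a ∉ t := fun hc => h ((Finset.mem_powersetCard.mp ht).1 hc)
    have hau : a ∉ u := fun hc => h ((Finset.mem_powersetCard.mp hu).1 hc)
    rw [← Finset.erase_insert hat, ← Finset.erase_insert hau, he]
  · rw [Finset.disjoint_right]
    intro t ht hts
    simp only [Finset.mem_image] at ht
    obtain ⟨u, hu, rfl⟩ := ht
    exact h ((Finset.mem_powersetCard.mp hts).1 (Finset.mem_insert_self a u))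

lemma E_empty (lam : α → ℝ) (k : ℕ) : E lam (∅ : Finset α) (k + 1) = 0 := by
  unfold E
  rw [Finset.powersetCard_eq_empty.mpr (by simp)]
  simp

lemma E_one (lam : α → ℝ) (s : Finset α) : E lam s 1 = ∑ i ∈ s, lam i := by
  induction s using Finset.induction with
  | empty => simpa using E_empty lam 0
  | insert _ _ h ih =>
    rename_i a s
    rw [show (1:ℕ) = 0 + 1 from rfl, E_insert lam h, E_zero]
    rw [show (0:ℕ) + 1 = 1 from rfl, ih, Finset.sum_insert h]
    ring

lemma E_two (lam : α → ℝ) (s : Finset α) :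
    E lam s 2 = ((∑ i ∈ s, lam i) ^ 2 - (∑ i ∈ s, lam i ^ 2)) / 2 := by
  induction s using Finset.induction with
  | empty => simpa using E_empty lam 1
  | insert _ _ h ih =>
    rename_i a s
    rw [show (2:ℕ) = 1 + 1 from rfl, E_insert lam h, E_one, ih,
      Finset.sum_insert h, Finset.sum_insert h]
    ring

lemma E_nonneg (lam : α → ℝ) {s : Finset α} (hs : ∀ i ∈ s, 0 ≤ lam i) (k : ℕ) :
    0 ≤ E lam s k := by
  apply Finset.sum_nonneg
  intro t ht
  exact Finset.prod_nonneg fun i hi => hs i ((Finset.mem_powersetCard.mp ht).1 hi)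

lemma E3_eq (lam : α → ℝ) (s : Finset α) :
    E lam s 3 = ((∑ i ∈ s, lam i) ^ 3 - 3 * (∑ i ∈ s, lam i) * (∑ i ∈ s, lam i ^ 2)
      + 2 * (∑ i ∈ s, lam i ^ 3)) / 6 := by
  induction s using Finset.induction with
  | empty => simpa using E_empty lam 2
  | insert _ _ h ih =>
    rename_i a s
    rw [show (3:ℕ) = 2 + 1 from rfl, E_insert lam h, E_two, ih,
      Finset.sum_insert h, Finset.sum_insert h, Finset.sum_insert h]
    ring
lemma sum_one' {N : ℕ} (i0 : Fin N) (y : Fin N → ℝ) (hy : ∀ i, i ≠ i0 → y i = 0) :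
    ∑ i, y i = y i0 := by
  rw [← Finset.sum_subset (Finset.subset_univ {i0})]
  · simp
  · intro i _ hi
    exact hy i (by simpa using hi)

lemma sum_two' {N : ℕ} {i0 j : Fin N} (hij : i0 ≠ j) (y : Fin N → ℝ)
    (hy : ∀ i, i ≠ i0 → i ≠ j → y i = 0) :
    ∑ i, y i = y i0 + y j := by
  rw [← Finset.sum_subset (Finset.subset_univ {i0, j})]
  · rw [Finset.sum_pair hij]
  · intro i _ hi
    simp only [Finset.mem_insert, Finset.mem_singleton, not_or] at hi
    exact hy i hi.1 hi.2

lemma core {N : ℕ} (lam c : Fin N → ℝ)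
    (hyp : ∀ x : Fin N → ℝ, ∑ i, c i * x i = 0 → 0 ≤ ∑ i, lam i * x i ^ 2) :
    0 ≤ ∑ i, c i ^ 2 * E lam (Finset.univ.erase i) 3 := by
  by_cases hpos : ∀ i, 0 ≤ lam i
  · exact Finset.sum_nonneg fun i _ => mul_nonneg (sq_nonneg _)
      (E_nonneg lam (fun j _ => hpos j) 3)
  push_neg at hpos
  obtain ⟨i0, hi0⟩ := hpos
  set μ : ℝ := -lam i0 with hμdef
  have hμ : 0 < μ := by simp [hμdef]; linarith
  -- c i0 ≠ 0
  have hc0 : c i0 ≠ 0 := by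
    intro h0
    have h1 : ∑ i, c i * (fun i => if i = i0 then (1:ℝ) else 0) i = 0 := by
      rw [sum_one' i0 _ (fun i hi => by simp [hi])]
      simp [h0]
    have h2 := hyp _ h1
    rw [sum_one' i0 _ (fun i hi => by simp [hi])] at h2
    simp at h2
    linarith
  have hc0sq : 0 < c i0 ^ 2 := by positivity
  -- pairwise conditions
  have key2 : ∀ j, j ≠ i0 → μ * c j ^ 2 ≤ lam j * c i0 ^ 2 := by
    intro j hj
    set x : Fin N → ℝ := fun i => if i = i0 then c j else if i = j then -(c i0) else 0 with hx
    have hzero : ∀ i, i ≠ i0 → i ≠ j → x i = 0 := by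
      intro i h1 h2; simp [hx, h1, h2]
    have h1 : ∑ i, c i * x i = 0 := by
      rw [sum_two' (Ne.symm hj) _ (fun i ha hb => by rw [hzero i ha hb]; ring)]
      simp [hx, Ne.symm hj, hj]
      ring
    have h2 := hyp _ h1
    rw [sum_two' (Ne.symm hj) _ (fun i ha hb => by rw [hzero i ha hb]; ring)] at h2
    simp [hx, Ne.symm hj, hj] at h2
    have : lam i0 = -μ := by simp [hμdef]
    nlinarith [h2]
  have hlam : ∀ j, j ≠ i0 → 0 ≤ lam j := by
    intro j hj
    have h := key2 j hj
    nlinarith [sq_nonneg (c j)]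
  -- zero eigenvalue forces zero coefficient
  have hczero : ∀ j, j ≠ i0 → lam j = 0 → c j = 0 := by
    intro j hj hlj
    have h := key2 j hj
    rw [hlj] at h
    have h2 : c j ^ 2 = 0 := le_antisymm (by nlinarith) (sq_nonneg _)
    exact pow_eq_zero_iff two_ne_zero |>.mp h2
  -- summed condition
  set d : Fin N → ℝ := fun j => if j = i0 then 0 else if lam j = 0 then 0 else c j / lam j with hd
  set S : ℝ := ∑ j, c j * d j with hS
  have hSnn : 0 ≤ S := by
    apply Finset.sum_nonneg
    intro j _
    by_cases h1 : j = i0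
    · simp [hd, h1]
    by_cases h2 : lam j = 0
    · simp [hd, h1, h2]
    · have hl : 0 < lam j := lt_of_le_of_ne (hlam j h1) (Ne.symm h2)
      simp only [hd, h1, h2, if_false]
      have : c j * (c j / lam j) = c j ^ 2 / lam j := by ring
      rw [this]
      exact div_nonneg (sq_nonneg _) hl.le
  have hld : ∀ j, c j * d j = lam j * d j ^ 2 := by
    intro j
    by_cases h1 : j = i0
    · simp [hd, h1]
    by_cases h2 : lam j = 0
    · simp [hd, h1, h2]
    · simp only [hd, h1, h2, if_false]
      field_simp
  have hdi0 : d i0 = 0 := by simp [hd]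
  have hSerase : ∑ i ∈ Finset.univ.erase i0, c i * d i = S := by
    rw [hS, ← Finset.sum_erase_add _ _ (Finset.mem_univ i0), hdi0]
    ring
  have hmuS : μ * S ≤ c i0 ^ 2 := by
    set x : Fin N → ℝ := fun i => if i = i0 then -(S / c i0) else d i with hx
    have h1 : ∑ i, c i * x i = 0 := by
      rw [← Finset.sum_erase_add _ _ (Finset.mem_univ i0)]
      rw [Finset.sum_congr rfl (fun i hi => by
        rw [show x i = d i by simp [hx, (Finset.mem_erase.mp hi).1] ] : ∀ i ∈ Finset.univ.erase i0, c i * x i = c i * d i)]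
      rw [hSerase]
      have : c i0 * x i0 = -S := by
        simp only [hx, if_pos rfl]
        field_simp
      rw [this]; ring
    have h2 := hyp _ h1
    rw [← Finset.sum_erase_add _ _ (Finset.mem_univ i0)] at h2
    rw [Finset.sum_congr rfl (fun i hi => by
      rw [show x i = d i by simp [hx, (Finset.mem_erase.mp hi).1] ] : ∀ i ∈ Finset.univ.erase i0, lam i * x i ^ 2 = lam i * d i ^ 2)] at h2
    rw [Finset.sum_congr rfl (fun i _ => (hld i).symm), hSerase] at h2
    have hl : lam i0 = -μ := by simp [hμdef]
    have e : lam i0 * x i0 ^ 2 = -(μ * S ^ 2) / c i0 ^ 2 := by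
      simp only [hx, if_pos rfl, hl]
      field_simp
    rw [e] at h2
    have h3 : μ * S ^ 2 / c i0 ^ 2 ≤ S := by
      have he : -(μ * S ^ 2) / c i0 ^ 2 = -(μ * S ^ 2 / c i0 ^ 2) := by ring
      rw [he] at h2
      linarith
    have h4 : μ * S ^ 2 ≤ S * c i0 ^ 2 := (div_le_iff₀ hc0sq).mp h3
    rcases eq_or_lt_of_le hSnn with h | h
    · have hz : μ * S = 0 := by rw [← h, mul_zero]
      linarith [hc0sq]
    · nlinarith [h4]
  -- final assembly
  set s0 : Finset (Fin N) := Finset.univ.erase i0 with hs0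
  set A : ℝ := E lam s0 3 with hA
  have hAnn : 0 ≤ A := E_nonneg lam (fun j hj => hlam j (Finset.mem_erase.mp hj).1) 3
  rw [← Finset.sum_erase_add _ _ (Finset.mem_univ i0)]
  have termwise : ∀ j ∈ s0, -(μ * (c j * d j) * A) ≤ c j ^ 2 * E lam (Finset.univ.erase j) 3 := by
    intro j hj
    have hji0 : j ≠ i0 := (Finset.mem_erase.mp hj).1
    have hi0notin : i0 ∉ s0.erase j := fun h => (Finset.mem_erase.mp ((Finset.mem_erase.mp h).2)).1 rfl
    have hjnotin : j ∉ s0.erase j := fun h => (Finset.mem_erase.mp h).1 rfl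
    have hset : Finset.univ.erase j = insert i0 (s0.erase j) := by
      rw [hs0, Finset.erase_right_comm,
        Finset.insert_erase (Finset.mem_erase.mpr ⟨Ne.symm hji0, Finset.mem_univ i0⟩)]
    have hset2 : s0 = insert j (s0.erase j) := (Finset.insert_erase hj).symm
    have hE3j : E lam (Finset.univ.erase j) 3 =
        E lam (s0.erase j) 3 + lam i0 * E lam (s0.erase j) 2 := by
      rw [hset, show (3:ℕ) = 2 + 1 from rfl, E_insert lam hi0notin]
    have hE3A : A = E lam (s0.erase j) 3 + lam j * E lam (s0.erase j) 2 := by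
      rw [hA]
      nth_rewrite 1 [hset2]
      rw [show (3:ℕ) = 2 + 1 from rfl, E_insert lam hjnotin]
    have hE3nn : 0 ≤ E lam (s0.erase j) 3 :=
      E_nonneg lam (fun i hi => hlam i (Finset.mem_erase.mp ((Finset.mem_erase.mp hi).2)).1) 3
    have hE2nn : 0 ≤ E lam (s0.erase j) 2 :=
      E_nonneg lam (fun i hi => hlam i (Finset.mem_erase.mp ((Finset.mem_erase.mp hi).2)).1) 2
    have hl : lam i0 = -μ := by simp [hμdef]
    by_cases h2 : lam j = 0
    · have hcj := hczero j hji0 h2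
      simp [hcj, hd, hji0, h2]
    · have hlj : 0 < lam j := lt_of_le_of_ne (hlam j hji0) (Ne.symm h2)
      have hdj : d j = c j / lam j := by simp [hd, hji0, h2]
      rw [hdj, hE3j, hl]
      have key : -(μ * (c j * (c j / lam j)) * A) =
          c j ^ 2 * (E lam (s0.erase j) 3 + -μ * E lam (s0.erase j) 2)
          - c j ^ 2 * (1 + μ / lam j) * E lam (s0.erase j) 3 := by
        rw [hE3A]
        field_simp
        ring
      rw [key]
      have hpos2 : 0 ≤ c j ^ 2 * (1 + μ / lam j) * E lam (s0.erase j) 3 := by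
        have h1 : (0:ℝ) ≤ 1 + μ / lam j := by positivity
        positivity
      linarith
  have hsum := Finset.sum_le_sum termwise
  have hsum2 : ∑ j ∈ s0, -(μ * (c j * d j) * A) = -(μ * S * A) := by
    have hterm : ∀ j, -(μ * (c j * d j) * A) = (-(μ * A)) * (c j * d j) := fun j => by ring
    rw [Finset.sum_congr rfl (fun j _ => hterm j), ← Finset.mul_sum, hSerase]
    ring
  rw [← hs0, ← hA]
  nlinarith [mul_nonneg (sub_nonneg.mpr hmuS) hAnn, hsum, hsum2]

open Matrix

/-- Let `N ≥ 3`, `H` a real symmetric `N × N` matrix, `g ∈ ℝ^N`, `a > 0`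
and `b ∈ ℝ` such that `a H + b (g ⊗ g)` is positive semidefinite. Then, with `s := tr(H)`,
`(1/3)‖g‖²[2 tr((s I − H) H²) − 2 S₂(H) s] ≤ 2⟨(s I − H) H g, H g⟩ − 2 S₂(H)⟨H g, g⟩`. -/
theorem matrix_inequality_of_rank_one_convexity {N : ℕ} (hN : 3 ≤ N)
    (H : Matrix (Fin N) (Fin N) ℝ) (hH : H.IsSymm) (g : Fin N → ℝ)
    (a b : ℝ) (ha : 0 < a)
    (hpsd : (a • H + b • Matrix.vecMulVec g g).PosSemidef) :
    (1 / 3) * (g ⬝ᵥ g) *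
        (2 * ((H.trace • (1 : Matrix (Fin N) (Fin N) ℝ) - H) * (H * H)).trace
          - 2 * S2 H * H.trace)
      ≤ 2 * (((H.trace • (1 : Matrix (Fin N) (Fin N) ℝ) - H) *ᵥ (H *ᵥ g)) ⬝ᵥ (H *ᵥ g))
          - 2 * S2 H * ((H *ᵥ g) ⬝ᵥ g) := by
  classical
  have hHerm : H.IsHermitian := by
    rw [Matrix.IsHermitian, Matrix.conjTranspose_eq_transpose_of_trivial]
    exact hH
  set U : Matrix (Fin N) (Fin N) ℝ := (hHerm.eigenvectorUnitary : Matrix (Fin N) (Fin N) ℝ)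
    with hU
  set lam : Fin N → ℝ := hHerm.eigenvalues with hlamdef
  have hspec : H = U * Matrix.diagonal lam * star U := by
    have := hHerm.spectral_theorem
    simpa using this
  have hU1 : star U * U = 1 := (Matrix.mem_unitaryGroup_iff').mp hHerm.eigenvectorUnitary.2
  have hU2 : U * star U = 1 := (Matrix.mem_unitaryGroup_iff).mp hHerm.eigenvectorUnitary.2
  have hUT : Uᵀ = star U := by
    rw [Matrix.star_eq_conjTranspose, Matrix.conjTranspose_eq_transpose_of_trivial]
  have hdot : ∀ v w : Fin N → ℝ, (U *ᵥ v) ⬝ᵥ (U *ᵥ w) = v ⬝ᵥ w := by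
    intro v w
    rw [Matrix.dotProduct_mulVec, ← Matrix.vecMul_transpose, Matrix.vecMul_vecMul, hUT, hU1,
      Matrix.vecMul_one]
  set c : Fin N → ℝ := star U *ᵥ g with hc
  have hgc : g = U *ᵥ c := by
    rw [hc, Matrix.mulVec_mulVec, hU2, Matrix.one_mulVec]
  have hmul : ∀ w : Fin N → ℝ, H *ᵥ (U *ᵥ w) = U *ᵥ (fun i => lam i * w i) := by
    intro w
    rw [Matrix.mulVec_mulVec, hspec]
    rw [Matrix.mul_assoc, Matrix.mul_assoc, hU1, Matrix.mul_one, ← Matrix.mulVec_mulVec]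
    have hdw : Matrix.diagonal lam *ᵥ w = fun i => lam i * w i := by
      ext i
      rw [Matrix.mulVec_diagonal]
    rw [hdw]
  -- traces
  have htr : H.trace = ∑ i, lam i := by
    rw [hspec, Matrix.trace_mul_cycle, hU1, Matrix.one_mul, Matrix.trace_diagonal]
  have hsq : H * H = U * (Matrix.diagonal lam * Matrix.diagonal lam) * star U := by
    nth_rewrite 1 [hspec]
    nth_rewrite 1 [hspec]
    simp only [Matrix.mul_assoc]
    rw [← Matrix.mul_assoc (star U) U (Matrix.diagonal lam * star U), hU1, Matrix.one_mul]
  have htr2 : (H * H).trace = ∑ i, lam i ^ 2 := by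
    rw [hsq, Matrix.trace_mul_cycle, hU1, Matrix.one_mul,
      Matrix.diagonal_mul_diagonal, Matrix.trace_diagonal]
    exact Finset.sum_congr rfl fun i _ => (sq (lam i)).symm
  have hcube : H * (H * H) = U * (Matrix.diagonal lam *
      (Matrix.diagonal lam * Matrix.diagonal lam)) * star U := by
    rw [hsq, hspec]
    simp only [Matrix.mul_assoc]
    rw [← Matrix.mul_assoc (star U) U
      (Matrix.diagonal lam * (Matrix.diagonal lam * star U)), hU1, Matrix.one_mul]
  have htr3 : (H * (H * H)).trace = ∑ i, lam i ^ 3 := by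
    rw [hcube, Matrix.trace_mul_cycle, hU1, Matrix.one_mul, Matrix.diagonal_mul_diagonal,
      Matrix.diagonal_mul_diagonal, Matrix.trace_diagonal]
    exact Finset.sum_congr rfl fun i _ => by ring
  -- quadratic forms
  have hq0 : g ⬝ᵥ g = ∑ i, c i ^ 2 := by
    rw [hgc, hdot]
    exact Finset.sum_congr rfl fun i _ => (sq (c i)).symm
  have hHg : H *ᵥ g = U *ᵥ (fun i => lam i * c i) := by
    rw [hgc, hmul]
  have hq1 : (H *ᵥ g) ⬝ᵥ g = ∑ i, lam i * c i ^ 2 := by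
    rw [hHg, hgc, hdot]
    exact Finset.sum_congr rfl fun i _ => by ring
  have hq2 : (H *ᵥ g) ⬝ᵥ (H *ᵥ g) = ∑ i, lam i ^ 2 * c i ^ 2 := by
    rw [hHg, hdot]
    exact Finset.sum_congr rfl fun i _ => by ring
  have hq3 : (H *ᵥ (H *ᵥ g)) ⬝ᵥ (H *ᵥ g) = ∑ i, lam i ^ 3 * c i ^ 2 := by
    rw [hHg, hmul, hdot]
    exact Finset.sum_congr rfl fun i _ => by ring
  -- hypothesis transfer
  have hyp : ∀ x : Fin N → ℝ, ∑ i, c i * x i = 0 → 0 ≤ ∑ i, lam i * x i ^ 2 := by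
    intro x hx
    set y : Fin N → ℝ := U *ᵥ x with hy
    have hgy : g ⬝ᵥ y = 0 := by
      rw [hy, hgc, hdot]
      exact hx
    have hrank : Matrix.vecMulVec g g *ᵥ y = (g ⬝ᵥ y) • g := by
      ext i
      simp only [Matrix.mulVec, Matrix.vecMulVec_apply, dotProduct, Pi.smul_apply,
        smul_eq_mul, Finset.sum_mul, Finset.mul_sum]
      exact Finset.sum_congr rfl fun j _ => by ring
    have hpos := hpsd.dotProduct_mulVec_nonneg y
    rw [Matrix.add_mulVec, Matrix.smul_mulVec, Matrix.smul_mulVec, hrank, hgy,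
      zero_smul, smul_zero, add_zero, star_trivial, dotProduct_smul] at hpos
    have hform : y ⬝ᵥ (H *ᵥ y) = ∑ i, lam i * x i ^ 2 := by
      rw [hy, hmul, hdot]
      exact Finset.sum_congr rfl fun i _ => by ring
    rw [← hform]
    rw [smul_eq_mul] at hpos
    nlinarith [hpos, ha]
  have hT := core lam c hyp
  -- expand E3 terms
  set P1 : ℝ := ∑ i, lam i with hP1
  set P2 : ℝ := ∑ i, lam i ^ 2 with hP2
  set P3 : ℝ := ∑ i, lam i ^ 3 with hP3
  have hexp : ∀ i : Fin N, c i ^ 2 * E lam (Finset.univ.erase i) 3 =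
      (P1 ^ 3 - 3 * P1 * P2 + 2 * P3) / 6 * c i ^ 2
        - (P1 ^ 2 - P2) / 2 * (lam i * c i ^ 2)
        + P1 * (lam i ^ 2 * c i ^ 2) - lam i ^ 3 * c i ^ 2 := by
    intro i
    have e1 : ∑ j ∈ Finset.univ.erase i, lam j = P1 - lam i := by
      rw [hP1, ← Finset.sum_erase_add _ _ (Finset.mem_univ i)]; ring
    have e2 : ∑ j ∈ Finset.univ.erase i, lam j ^ 2 = P2 - lam i ^ 2 := by
      rw [hP2, ← Finset.sum_erase_add _ _ (Finset.mem_univ i)]; ring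
    have e3 : ∑ j ∈ Finset.univ.erase i, lam j ^ 3 = P3 - lam i ^ 3 := by
      rw [hP3, ← Finset.sum_erase_add _ _ (Finset.mem_univ i)]; ring
    rw [E3_eq, e1, e2, e3]
    ring
  rw [Finset.sum_congr rfl (fun i _ => hexp i)] at hT
  simp only [Finset.sum_add_distrib, Finset.sum_sub_distrib, ← Finset.mul_sum] at hT
  -- final: rewrite goal in terms of P, Q
  have hgoal2 : ((H.trace • (1 : Matrix (Fin N) (Fin N) ℝ) - H) * (H * H)).trace
      = P1 * P2 - P3 := by
    rw [Matrix.sub_mul, Matrix.smul_mul, Matrix.one_mul, Matrix.trace_sub, Matrix.trace_smul,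
      htr2, htr3, htr, hP1, hP2, hP3]
    simp [smul_eq_mul]
  have hgoal3 : ((H.trace • (1 : Matrix (Fin N) (Fin N) ℝ) - H) *ᵥ (H *ᵥ g)) ⬝ᵥ (H *ᵥ g)
      = P1 * (∑ i, lam i ^ 2 * c i ^ 2) - ∑ i, lam i ^ 3 * c i ^ 2 := by
    rw [Matrix.sub_mulVec, sub_dotProduct, Matrix.smul_mulVec, Matrix.one_mulVec,
      smul_dotProduct, hq2, hq3, htr, hP1]
    simp [smul_eq_mul]
  have hS2 : S2 H = (P1 ^ 2 - P2) / 2 := by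
    rw [S2, htr, htr2, hP1, hP2]; ring
  rw [hgoal2, hgoal3, hS2, hq0, hq1, htr]
  linarith [hT]
end
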